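/- Let f be an opmonoidal monad on a monoidal category A (a monad (f, μ, η) with opmonoidal structure f₂ : f(X ⊗ Y) → f(X) ⊗ f(Y), f₀ : f(K) → K, all compatible). Then the Eilenberg–Moore category A^f carries a monoidal structure with (M, ρ) ⊗ (N, τ) having underlying object M ⊗ N and action f(M ⊗ N) → f(M) ⊗ f(N) → M ⊗ N, and unit (K, f₀), such that the forgetful functor A^f → A is strict monoidal. -/

import Mathlib

/-!
STATEMENT 16: Let `f` be an opmonoidal monad on a monoidal category `A`: a monad
`(T, μ, η)` with an opmonoidal structure `d₂ : T(X ⊗ Y) ⟶ T X ⊗ T Y`,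
`d₀ : T(𝟙_A) ⟶ 𝟙_A`, coassociative, counital, and compatible with `μ` and `η`.
Then the Eilenberg–Moore category `A^T` carries a monoidal structure in which
`(M,ρ) ⊗ (N,τ)` has underlying object `M ⊗ N` and action
`T(M ⊗ N) ⟶ T M ⊗ T N ⟶ M ⊗ N`, with unit `(𝟙_A, d₀)`, and such that the forgetful
functor `A^T → A` is strict monoidal (tensor, unit, associators and unitors are
those of `A`).
-/

open CategoryTheory MonoidalCategory

universe v u

namespace OpmonEM

variable {A : Type u} [Category.{v} A] [MonoidalCategory A] (T : Monad A)
    (d2 : ∀ X Y : A, T.obj (X ⊗ Y) ⟶ T.obj X ⊗ T.obj Y)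
    (d0 : T.obj (𝟙_ A) ⟶ 𝟙_ A)

section

variable
    (hnat : ∀ {X Y X' Y' : A} (f : X ⟶ X') (g : Y ⟶ Y'),
      T.map (f ⊗ₘ g) ≫ d2 X' Y' = d2 X Y ≫ (T.map f ⊗ₘ T.map g))
    (hcoassoc : ∀ X Y Z : A,
      T.map (α_ X Y Z).hom ≫ d2 X (Y ⊗ Z) ≫ (𝟙 (T.obj X) ⊗ₘ d2 Y Z) =
        d2 (X ⊗ Y) Z ≫ (d2 X Y ⊗ₘ 𝟙 (T.obj Z)) ≫ (α_ (T.obj X) (T.obj Y) (T.obj Z)).hom)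
    (hcol : ∀ X : A, d2 (𝟙_ A) X ≫ (d0 ⊗ₘ 𝟙 (T.obj X)) ≫ (λ_ (T.obj X)).hom =
      T.map (λ_ X).hom)
    (hcor : ∀ X : A, d2 X (𝟙_ A) ≫ (𝟙 (T.obj X) ⊗ₘ d0) ≫ (ρ_ (T.obj X)).hom =
      T.map (ρ_ X).hom)
    (hμ2 : ∀ X Y : A, T.μ.app (X ⊗ Y) ≫ d2 X Y =
      T.map (d2 X Y) ≫ d2 (T.obj X) (T.obj Y) ≫ (T.μ.app X ⊗ₘ T.μ.app Y))
    (hμ0 : T.μ.app (𝟙_ A) ≫ d0 = T.map d0 ≫ d0)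
    (hη2 : ∀ X Y : A, T.η.app (X ⊗ Y) ≫ d2 X Y = (T.η.app X ⊗ₘ T.η.app Y))
    (hη0 : T.η.app (𝟙_ A) ≫ d0 = 𝟙 (𝟙_ A))

/-- Tensor product of algebras. -/
@[simps]
def tObj (m n : T.Algebra) : T.Algebra where
  A := m.A ⊗ n.A
  a := d2 m.A n.A ≫ (m.a ⊗ₘ n.a)
  unit := by
    rw [← Category.assoc, hη2, tensorHom_comp_tensorHom, m.unit, n.unit]
    exact id_tensorHom_id _ _
  assoc := by
    rw [← Category.assoc, hμ2, Category.assoc, Category.assoc,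
      tensorHom_comp_tensorHom, m.assoc, n.assoc, ← tensorHom_comp_tensorHom, ← Category.assoc (d2 _ _),
      ← hnat, Functor.map_comp]
    simp

/-- Unit algebra. -/
@[simps]
def tUnit : T.Algebra where
  A := 𝟙_ A
  a := d0
  unit := hη0
  assoc := hμ0

/-- Tensor of algebra morphisms. -/
@[simps]
def tHom {m n m' n' : T.Algebra} (f : m ⟶ m') (g : n ⟶ n') :
    tObj T d2 hnat hμ2 hη2 m n ⟶ tObj T d2 hnat hμ2 hη2 m' n' where
  f := f.f ⊗ₘ g.f
  h := by
    change T.map (f.f ⊗ₘ g.f) ≫ d2 m'.A n'.A ≫ (m'.a ⊗ₘ n'.a) =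
      (d2 m.A n.A ≫ (m.a ⊗ₘ n.a)) ≫ (f.f ⊗ₘ g.f)
    rw [← Category.assoc, hnat, Category.assoc, tensorHom_comp_tensorHom, f.h, g.h,
      ← tensorHom_comp_tensorHom]
    simp

@[simps!]
def tAssoc (m n k : T.Algebra) :
    tObj T d2 hnat hμ2 hη2 (tObj T d2 hnat hμ2 hη2 m n) k ≅
      tObj T d2 hnat hμ2 hη2 m (tObj T d2 hnat hμ2 hη2 n k) :=
  Monad.Algebra.isoMk (α_ m.A n.A k.A)
    (by
      change T.map (α_ m.A n.A k.A).hom ≫ d2 m.A (n.A ⊗ k.A) ≫ (m.a ⊗ₘ d2 n.A k.A ≫ (n.a ⊗ₘ k.a)) =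
        (d2 (m.A ⊗ n.A) k.A ≫ (d2 m.A n.A ≫ (m.a ⊗ₘ n.a) ⊗ₘ k.a)) ≫ (α_ m.A n.A k.A).hom
      rw [show m.a ⊗ₘ d2 n.A k.A ≫ (n.a ⊗ₘ k.a) =
            (𝟙 (T.obj m.A) ⊗ₘ d2 n.A k.A) ≫ (m.a ⊗ₘ (n.a ⊗ₘ k.a)) by
          rw [tensorHom_comp_tensorHom, Category.id_comp],
        show d2 m.A n.A ≫ (m.a ⊗ₘ n.a) ⊗ₘ k.a =
            (d2 m.A n.A ⊗ₘ 𝟙 (T.obj k.A)) ≫ ((m.a ⊗ₘ n.a) ⊗ₘ k.a) by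
          rw [tensorHom_comp_tensorHom, Category.id_comp]]
      simp only [Category.assoc]
      rw [reassoc_of% hcoassoc m.A n.A k.A]
      rw [associator_naturality])

@[simps!]
def tLeft (m : T.Algebra) : tObj T d2 hnat hμ2 hη2 (tUnit T d0 hμ0 hη0) m ≅ m :=
  Monad.Algebra.isoMk (λ_ m.A)
    (by
      change T.map (λ_ m.A).hom ≫ m.a = (d2 (𝟙_ A) m.A ≫ (d0 ⊗ₘ m.a)) ≫ (λ_ m.A).hom
      rw [← hcol]
      simp only [Category.assoc]
      rw [← leftUnitor_naturality]
      simp only [← MonoidalCategory.id_tensorHom, tensorHom_comp_tensorHom_assoc,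
        Category.comp_id, Category.id_comp])

@[simps!]
def tRight (m : T.Algebra) : tObj T d2 hnat hμ2 hη2 m (tUnit T d0 hμ0 hη0) ≅ m :=
  Monad.Algebra.isoMk (ρ_ m.A)
    (by
      change T.map (ρ_ m.A).hom ≫ m.a = (d2 m.A (𝟙_ A) ≫ (m.a ⊗ₘ d0)) ≫ (ρ_ m.A).hom
      rw [← hcor]
      simp only [Category.assoc]
      rw [← rightUnitor_naturality]
      simp only [← MonoidalCategory.tensorHom_id, tensorHom_comp_tensorHom_assoc,
        Category.comp_id, Category.id_comp])

@[simps]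
def mcs : MonoidalCategoryStruct T.Algebra where
  tensorObj := tObj T d2 hnat hμ2 hη2
  tensorHom := tHom T d2 hnat hμ2 hη2
  whiskerLeft m _ _ f := tHom T d2 hnat hμ2 hη2 (𝟙 m) f
  whiskerRight f k := tHom T d2 hnat hμ2 hη2 f (𝟙 k)
  tensorUnit := tUnit T d0 hμ0 hη0
  associator := tAssoc T d2 hnat hcoassoc hμ2 hη2
  leftUnitor := tLeft T d2 d0 hnat hcol hμ2 hμ0 hη2 hη0
  rightUnitor := tRight T d2 d0 hnat hcor hμ2 hμ0 hη2 hη0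

def mc : MonoidalCategory T.Algebra :=
  letI := mcs T d2 d0 hnat hcoassoc hcol hcor hμ2 hμ0 hη2 hη0
  MonoidalCategory.ofTensorHom
    (id_tensorHom_id := by intros; ext; exact id_tensorHom_id _ _)
    (id_tensorHom := by intros; rfl)
    (tensorHom_id := by intros; rfl)
    (tensorHom_comp_tensorHom := by intros; ext; exact tensorHom_comp_tensorHom _ _ _ _)
    (associator_naturality := by intros; ext; exact associator_naturality _ _ _)
    (leftUnitor_naturality := by
      intro X Y f; ext
      exact (by simp : (𝟙 (𝟙_ A) ⊗ₘ f.f) ≫ (λ_ Y.A).hom = (λ_ X.A).hom ≫ f.f))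
    (rightUnitor_naturality := by
      intro X Y f; ext
      exact (by simp : (f.f ⊗ₘ 𝟙 (𝟙_ A)) ≫ (ρ_ Y.A).hom = (ρ_ X.A).hom ≫ f.f))
    (pentagon := by
      intro W X Y Z; ext
      exact (by simp : ((α_ W.A X.A Y.A).hom ⊗ₘ 𝟙 Z.A) ≫ (α_ W.A (X.A ⊗ Y.A) Z.A).hom ≫
        (𝟙 W.A ⊗ₘ (α_ X.A Y.A Z.A).hom) = (α_ (W.A ⊗ X.A) Y.A Z.A).hom ≫ (α_ W.A X.A (Y.A ⊗ Z.A)).hom))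
    (triangle := by
      intro X Y; ext
      exact (by simp : (α_ X.A (𝟙_ A) Y.A).hom ≫ (𝟙 X.A ⊗ₘ (λ_ Y.A).hom) = (ρ_ X.A).hom ⊗ₘ 𝟙 Y.A))

end
end OpmonEM

open OpmonEM in
theorem opmonoidalMonad_eilenbergMoore_monoidal
    {A : Type u} [Category.{v} A] [MonoidalCategory A] (T : Monad A)
    (d2 : ∀ X Y : A, T.obj (X ⊗ Y) ⟶ T.obj X ⊗ T.obj Y)
    (d0 : T.obj (𝟙_ A) ⟶ 𝟙_ A)
    -- naturality of `d₂`
    (hnat : ∀ {X Y X' Y' : A} (f : X ⟶ X') (g : Y ⟶ Y'),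
      T.map (f ⊗ₘ g) ≫ d2 X' Y' = d2 X Y ≫ (T.map f ⊗ₘ T.map g))
    -- coassociativity and counitality of the opmonoidal structure
    (hcoassoc : ∀ X Y Z : A,
      T.map (α_ X Y Z).hom ≫ d2 X (Y ⊗ Z) ≫ (𝟙 (T.obj X) ⊗ₘ d2 Y Z) =
        d2 (X ⊗ Y) Z ≫ (d2 X Y ⊗ₘ 𝟙 (T.obj Z)) ≫ (α_ (T.obj X) (T.obj Y) (T.obj Z)).hom)
    (hcol : ∀ X : A, d2 (𝟙_ A) X ≫ (d0 ⊗ₘ 𝟙 (T.obj X)) ≫ (λ_ (T.obj X)).hom =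
      T.map (λ_ X).hom)
    (hcor : ∀ X : A, d2 X (𝟙_ A) ≫ (𝟙 (T.obj X) ⊗ₘ d0) ≫ (ρ_ (T.obj X)).hom =
      T.map (ρ_ X).hom)
    -- `μ` and `η` are opmonoidal natural transformations
    (hμ2 : ∀ X Y : A, T.μ.app (X ⊗ Y) ≫ d2 X Y =
      T.map (d2 X Y) ≫ d2 (T.obj X) (T.obj Y) ≫ (T.μ.app X ⊗ₘ T.μ.app Y))
    (hμ0 : T.μ.app (𝟙_ A) ≫ d0 = T.map d0 ≫ d0)
    (hη2 : ∀ X Y : A, T.η.app (X ⊗ Y) ≫ d2 X Y = (T.η.app X ⊗ₘ T.η.app Y))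
    (hη0 : T.η.app (𝟙_ A) ≫ d0 = 𝟙 (𝟙_ A)) :
    ∃ M : MonoidalCategory T.Algebra,
      -- tensor product of algebras: underlying object `M ⊗ N`, with the action
      -- `T (M ⊗ N) ⟶ T M ⊗ T N ⟶ M ⊗ N`
      (∀ m n : T.Algebra,
        (M.toMonoidalCategoryStruct.tensorObj m n).A = m.A ⊗ n.A ∧
        HEq (M.toMonoidalCategoryStruct.tensorObj m n).a (d2 m.A n.A ≫ (m.a ⊗ₘ n.a))) ∧
      -- unit object `(𝟙_A, d₀)`
      (M.toMonoidalCategoryStruct.tensorUnit.A = 𝟙_ A ∧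
        HEq M.toMonoidalCategoryStruct.tensorUnit.a d0) ∧
      -- the forgetful functor is strict monoidal
      (∀ {m n m' n' : T.Algebra} (f : m ⟶ m') (g : n ⟶ n'),
        HEq (M.toMonoidalCategoryStruct.tensorHom f g).f (f.f ⊗ₘ g.f)) ∧
      (∀ m n k : T.Algebra,
        HEq (M.toMonoidalCategoryStruct.associator m n k).hom.f (α_ m.A n.A k.A).hom) ∧
      (∀ m : T.Algebra,
        HEq (M.toMonoidalCategoryStruct.leftUnitor m).hom.f (λ_ m.A).hom) ∧
      (∀ m : T.Algebra,
        HEq (M.toMonoidalCategoryStruct.rightUnitor m).hom.f (ρ_ m.A).hom) := by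
  refine ⟨mc T d2 d0 hnat hcoassoc hcol hcor hμ2 hμ0 hη2 hη0,
    fun m n => ⟨rfl, HEq.rfl⟩, ⟨rfl, HEq.rfl⟩,
    fun f g => HEq.rfl, fun m n k => HEq.rfl, fun m => HEq.rfl, fun m => HEq.rfl⟩
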